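/- Let r = q ≥ 2 and let c be an integer with r > c ≥ 1. Let ξ and η be r×(r−c) real matrices of full column rank r−c, let ξ⊥ and η⊥ be r×c real matrices of full column rank c with ξ'ξ⊥ = 0 and η'η⊥ = 0, and let D be an r×r real matrix. Then the r×r matrix M(1), whose first c rows are ξ⊥'D and whose last r−c rows are ξ'ξη', is invertible if and only if the c×c matrix ξ⊥'Dη⊥ is invertible. -/

import Mathlib

open Matrix

/-- A square real matrix of full rank has unit determinant. -/
lemma isUnit_det_of_rank_eq_card {n : Type*} [Fintype n] [DecidableEq n]
    (A : Matrix n n ℝ) (h : A.rank = Fintype.card n) : IsUnit A.det := by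
  rw [isUnit_iff_ne_zero]
  intro hdet
  obtain ⟨v, hv, hAv⟩ := (Matrix.exists_mulVec_eq_zero_iff).2 hdet
  -- range of mulVecLin is top
  have hrange : LinearMap.range A.mulVecLin = ⊤ := by
    apply Submodule.eq_top_of_finrank_eq
    rw [← Matrix.rank, h]
    simp [Module.finrank_pi]
  have hsurj : Function.Surjective A.mulVecLin := LinearMap.range_eq_top.mp hrange
  have hinj : Function.Injective A.mulVecLin :=
    (LinearMap.injective_iff_surjective (f := A.mulVecLin)).2 hsurj
  apply hv
  have : A.mulVecLin v = A.mulVecLin 0 := by simpa [Matrix.mulVecLin_apply] using hAv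
  exact hinj this

/-- Gram matrix of a full-column-rank real matrix has unit determinant. -/
lemma isUnit_det_gram {m n : ℕ} (A : Matrix (Fin m) (Fin n) ℝ) (h : A.rank = n) :
    IsUnit (Aᵀ * A).det := by
  apply isUnit_det_of_rank_eq_card
  rw [Matrix.rank_transpose_mul_self, h, Fintype.card_fin]

/-- **Johansen's full-rank condition in the non-singular case `r = q` (remark after
Proposition 2).** With `ξ, η` of full column rank `r − c`, orthogonal complements
`ξ⊥, η⊥` of full column rank `c`, and `D` an `r × r` matrix, the matrix `M(1)` — first
`c` rows `ξ⊥'D`, last `r − c` rows `ξ'ξη'` — is invertible iff `ξ⊥'Dη⊥` is invertible. -/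
theorem stmt_6 (r c : ℕ) (hr : 2 ≤ r) (hc1 : 1 ≤ c) (hc2 : c < r)
    (ξ η : Matrix (Fin r) (Fin (r - c)) ℝ) (ξp ηp : Matrix (Fin r) (Fin c) ℝ)
    (hξ : ξ.rank = r - c) (hη : η.rank = r - c)
    (hξp : ξp.rank = c) (hηp : ηp.rank = c)
    (hoξ : ξᵀ * ξp = 0) (hoη : ηᵀ * ηp = 0)
    (D : Matrix (Fin r) (Fin r) ℝ) :
    IsUnit ((Matrix.reindex (finSumFinEquiv.trans (finCongr (by omega))) (Equiv.refl (Fin r))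
        (Matrix.fromRows (ξpᵀ * D) (ξᵀ * ξ * ηᵀ))).det) ↔
      IsUnit (ξpᵀ * D * ηp).det := by
  have hrc : c + (r - c) = r := by omega
  set e : Fin c ⊕ Fin (r - c) ≃ Fin r := finSumFinEquiv.trans (finCongr hrc) with he
  set M : Matrix (Fin c ⊕ Fin (r - c)) (Fin r) ℝ := Matrix.fromRows (ξpᵀ * D) (ξᵀ * ξ * ηᵀ)
    with hM
  set N : Matrix (Fin r) (Fin c ⊕ Fin (r - c)) ℝ := Matrix.fromCols ηp η with hN
  -- the reindexed matrices
  set f : Fin r ≃ Fin r := Equiv.refl (Fin r) with hf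
  set L : Matrix (Fin r) (Fin r) ℝ := M.submatrix e.symm f.symm with hL
  set N' : Matrix (Fin r) (Fin r) ℝ := N.submatrix f.symm e.symm with hN'
  have hLHS : (Matrix.reindex (finSumFinEquiv.trans (finCongr (by omega : c + (r - c) = r)))
      (Equiv.refl (Fin r)) M) = L := by
    rw [Matrix.reindex_apply]
  -- orthogonality transposed
  have hoη' : ηpᵀ * η = 0 := by
    have := congrArg Matrix.transpose hoη
    simpa [Matrix.transpose_mul] using this
  -- M * N is block upper triangular
  have hMN : M * N = Matrix.fromBlocks (ξpᵀ * D * ηp) (ξpᵀ * D * η) 0 (ξᵀ * ξ * (ηᵀ * η)) := by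
    have h1 : ξᵀ * ξ * ηᵀ * ηp = 0 := by rw [Matrix.mul_assoc, hoη, Matrix.mul_zero]
    have h2 : ξᵀ * ξ * ηᵀ * η = ξᵀ * ξ * (ηᵀ * η) := Matrix.mul_assoc _ _ _
    rw [hM, hN, Matrix.fromRows_mul_fromCols, h1, h2]
  -- Nᵀ * N is block diagonal
  have hNtN : Nᵀ * N = Matrix.fromBlocks (ηpᵀ * ηp) 0 0 (ηᵀ * η) := by
    rw [hN, Matrix.transpose_fromCols, Matrix.fromRows_mul_fromCols, hoη, hoη']
  -- Gram determinants are units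
  have hGη : IsUnit (ηᵀ * η).det := isUnit_det_gram η hη
  have hGηp : IsUnit (ηpᵀ * ηp).det := isUnit_det_gram ηp hηp
  have hGξ : IsUnit (ξᵀ * ξ).det := isUnit_det_gram ξ hξ
  -- det N' is a unit
  have hdetN'sq : N'.det * N'.det = (ηpᵀ * ηp).det * (ηᵀ * η).det := by
    have h1 : N'ᵀ * N' = (Nᵀ * N).submatrix e.symm e.symm := by
      rw [hN', Matrix.transpose_submatrix]
      exact Matrix.submatrix_mul_equiv Nᵀ N _ f.symm _
    have h2 : (N'ᵀ * N').det = N'.det * N'.det := by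
      rw [Matrix.det_mul, Matrix.det_transpose]
    rw [← h2, h1, Matrix.det_submatrix_equiv_self, hNtN, Matrix.det_fromBlocks_zero₂₁]
  have hdetN' : IsUnit N'.det := by
    have : IsUnit (N'.det * N'.det) := by rw [hdetN'sq]; exact hGηp.mul hGη
    exact (IsUnit.mul_iff.mp this).1
  -- det (L * N')
  have hLN' : L * N' = (M * N).submatrix e.symm e.symm :=
    Matrix.submatrix_mul_equiv M N _ f.symm _
  have hdetLN' : L.det * N'.det = (ξpᵀ * D * ηp).det * ((ξᵀ * ξ).det * (ηᵀ * η).det) := by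
    rw [← Matrix.det_mul, hLN', Matrix.det_submatrix_equiv_self, hMN,
      Matrix.det_fromBlocks_zero₂₁, Matrix.det_mul]
  rw [hLHS]
  constructor
  · intro hLdet
    have : IsUnit (L.det * N'.det) := hLdet.mul hdetN'
    rw [hdetLN'] at this
    exact (IsUnit.mul_iff.mp this).1
  · intro hP
    have : IsUnit (L.det * N'.det) := by
      rw [hdetLN']
      exact hP.mul (hGξ.mul hGη)
    exact (IsUnit.mul_iff.mp this).1
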